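/- Let N be a real number and let D_N, D_N*, L_N be the Dirac-monopole operators on smooth functions ψ : ℂ → ℂ. Then the intertwining relations L_{N+1}(D_N ψ) = D_N(L_N ψ) and L_N(D_N* ψ) = D_N*(L_{N+1} ψ) hold for every smooth ψ : ℂ → ℂ. -/

import Mathlib

open Complex ComplexConjugate MeasureTheory

noncomputable section

/-- Partial derivative in the x-direction (identifying ℂ with ℝ²). -/
def pdx (f : ℂ → ℂ) (z : ℂ) : ℂ := fderiv ℝ f z 1

/-- Partial derivative in the y-direction. -/
def pdy (f : ℂ → ℂ) (z : ℂ) : ℂ := fderiv ℝ f z Complex.I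

/-- Wirtinger derivative ∂ = (∂ₓ - i ∂_y)/2. -/
def wd (f : ℂ → ℂ) (z : ℂ) : ℂ := (pdx f z - Complex.I * pdy f z) / 2

/-- Wirtinger derivative ∂̄ = (∂ₓ + i ∂_y)/2. -/
def wdb (f : ℂ → ℂ) (z : ℂ) : ℂ := (pdx f z + Complex.I * pdy f z) / 2

section helpers

variable {f g : ℂ → ℂ} {z : ℂ} {c : ℂ}

@[fun_prop]
theorem differentiable_conj' : Differentiable ℝ (fun z : ℂ => (starRingEnd ℂ) z) :=
  Complex.conjCLE.differentiable

@[fun_prop]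
theorem contDiff_conj' : ContDiff ℝ (⊤ : ℕ∞) (fun z : ℂ => (starRingEnd ℂ) z) :=
  Complex.conjCLE.contDiff

theorem contDiff_pdx (hf : ContDiff ℝ (⊤ : ℕ∞) f) : ContDiff ℝ (⊤ : ℕ∞) (pdx f) :=
  (hf.fderiv_right (by exact_mod_cast le_refl _)).clm_apply contDiff_const

theorem contDiff_pdy (hf : ContDiff ℝ (⊤ : ℕ∞) f) : ContDiff ℝ (⊤ : ℕ∞) (pdy f) :=
  (hf.fderiv_right (by exact_mod_cast le_refl _)).clm_apply contDiff_const

@[fun_prop]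
theorem contDiff_wd (hf : ContDiff ℝ (⊤ : ℕ∞) f) : ContDiff ℝ (⊤ : ℕ∞) (wd f) := by
  unfold wd
  exact (((contDiff_pdx hf).sub (contDiff_const.mul (contDiff_pdy hf)))).div_const 2

@[fun_prop]
theorem contDiff_wdb (hf : ContDiff ℝ (⊤ : ℕ∞) f) : ContDiff ℝ (⊤ : ℕ∞) (wdb f) := by
  unfold wdb
  exact (((contDiff_pdx hf).add (contDiff_const.mul (contDiff_pdy hf)))).div_const 2

@[fun_prop]
theorem differentiable_wd (hf : ContDiff ℝ (⊤ : ℕ∞) f) : Differentiable ℝ (wd f) :=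
  (contDiff_wd hf).differentiable (by simp)

@[fun_prop]
theorem differentiable_wdb (hf : ContDiff ℝ (⊤ : ℕ∞) f) : Differentiable ℝ (wdb f) :=
  (contDiff_wdb hf).differentiable (by simp)

theorem pdx_add (hf : DifferentiableAt ℝ f z) (hg : DifferentiableAt ℝ g z) :
    pdx (fun w => f w + g w) z = pdx f z + pdx g z := by
  simp [pdx, fderiv_fun_add hf hg]

theorem pdy_add (hf : DifferentiableAt ℝ f z) (hg : DifferentiableAt ℝ g z) :
    pdy (fun w => f w + g w) z = pdy f z + pdy g z := by
  simp [pdy, fderiv_fun_add hf hg]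

theorem pdx_mul (hf : DifferentiableAt ℝ f z) (hg : DifferentiableAt ℝ g z) :
    pdx (fun w => f w * g w) z = pdx f z * g z + f z * pdx g z := by
  simp [pdx, fderiv_fun_mul hf hg, smul_eq_mul]; ring

theorem pdy_mul (hf : DifferentiableAt ℝ f z) (hg : DifferentiableAt ℝ g z) :
    pdy (fun w => f w * g w) z = pdy f z * g z + f z * pdy g z := by
  simp [pdy, fderiv_fun_mul hf hg, smul_eq_mul]; ring

theorem pdx_const : pdx (fun _ => c) z = 0 := by simp [pdx]
theorem pdy_const : pdy (fun _ => c) z = 0 := by simp [pdy]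
theorem pdx_id : pdx (fun w => w) z = 1 := by simp [pdx, fderiv_id']
theorem pdy_id : pdy (fun w => w) z = I := by simp [pdy, fderiv_id']

theorem pdx_conj : pdx (fun w => conj w) z = 1 := by
  rw [pdx, show (fun w : ℂ => (starRingEnd ℂ) w) = ⇑Complex.conjCLE from rfl,
    Complex.conjCLE.fderiv]
  simp

theorem pdy_conj : pdy (fun w => conj w) z = -I := by
  rw [pdy, show (fun w : ℂ => (starRingEnd ℂ) w) = ⇑Complex.conjCLE from rfl,
    Complex.conjCLE.fderiv]
  simp

-- function-level wd/wdb rules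
theorem wd_add (hf : Differentiable ℝ f) (hg : Differentiable ℝ g) :
    wd (fun w => f w + g w) = fun z => wd f z + wd g z := by
  funext z; unfold wd; rw [pdx_add (hf z) (hg z), pdy_add (hf z) (hg z)]; ring

theorem wdb_add (hf : Differentiable ℝ f) (hg : Differentiable ℝ g) :
    wdb (fun w => f w + g w) = fun z => wdb f z + wdb g z := by
  funext z; unfold wdb; rw [pdx_add (hf z) (hg z), pdy_add (hf z) (hg z)]; ring

theorem wd_mul (hf : Differentiable ℝ f) (hg : Differentiable ℝ g) :
    wd (fun w => f w * g w) = fun z => wd f z * g z + f z * wd g z := by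
  funext z; unfold wd; rw [pdx_mul (hf z) (hg z), pdy_mul (hf z) (hg z)]; ring

theorem wdb_mul (hf : Differentiable ℝ f) (hg : Differentiable ℝ g) :
    wdb (fun w => f w * g w) = fun z => wdb f z * g z + f z * wdb g z := by
  funext z; unfold wdb; rw [pdx_mul (hf z) (hg z), pdy_mul (hf z) (hg z)]; ring

theorem pdx_neg : pdx (fun w => -f w) z = -pdx f z := by simp [pdx, fderiv_neg]
theorem pdy_neg : pdy (fun w => -f w) z = -pdy f z := by simp [pdy, fderiv_neg]

theorem pdx_cmul (hf : DifferentiableAt ℝ f z) :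
    pdx (fun w => c * f w) z = c * pdx f z := by
  simp [pdx, fderiv_const_mul hf, smul_eq_mul]

theorem pdy_cmul (hf : DifferentiableAt ℝ f z) :
    pdy (fun w => c * f w) z = c * pdy f z := by
  simp [pdy, fderiv_const_mul hf, smul_eq_mul]

theorem wd_cmul (hf : Differentiable ℝ f) :
    wd (fun w => c * f w) = fun z => c * wd f z := by
  funext z; unfold wd; rw [pdx_cmul (hf z), pdy_cmul (hf z)]; ring

theorem wdb_cmul (hf : Differentiable ℝ f) :
    wdb (fun w => c * f w) = fun z => c * wdb f z := by
  funext z; unfold wdb; rw [pdx_cmul (hf z), pdy_cmul (hf z)]; ring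

theorem wd_neg : wd (fun w => -f w) = fun z => -wd f z := by
  funext z; unfold wd; rw [pdx_neg, pdy_neg]; ring

theorem wdb_neg : wdb (fun w => -f w) = fun z => -wdb f z := by
  funext z; unfold wdb; rw [pdx_neg, pdy_neg]; ring

theorem wd_sub (hf : Differentiable ℝ f) (hg : Differentiable ℝ g) :
    wd (fun w => f w - g w) = fun z => wd f z - wd g z := by
  have h : (fun w => f w - g w) = fun w => f w + -g w := by funext w; ring
  rw [h, wd_add hf hg.fun_neg, wd_neg]; funext z; ring

theorem wdb_sub (hf : Differentiable ℝ f) (hg : Differentiable ℝ g) :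
    wdb (fun w => f w - g w) = fun z => wdb f z - wdb g z := by
  have h : (fun w => f w - g w) = fun w => f w + -g w := by funext w; ring
  rw [h, wdb_add hf hg.fun_neg, wdb_neg]; funext z; ring

theorem wd_const : wd (fun _ => c) = fun _ => 0 := by
  funext z; unfold wd; simp [pdx_const, pdy_const]

theorem wdb_const : wdb (fun _ => c) = fun _ => 0 := by
  funext z; unfold wdb; simp [pdx_const, pdy_const]

theorem wd_id : wd (fun w => w) = fun _ => 1 := by
  funext z; unfold wd; rw [pdx_id, pdy_id]
  rw [div_eq_iff (two_ne_zero)]; ring_nf; rw [Complex.I_sq]; ring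

theorem wdb_id : wdb (fun w => w) = fun _ => 0 := by
  funext z; unfold wdb; rw [pdx_id, pdy_id]
  rw [div_eq_iff (two_ne_zero)]; ring_nf; rw [Complex.I_sq]; ring

theorem wd_hmul : wd (HMul.hMul c) = fun _ => c := by
  have h : (HMul.hMul c : ℂ → ℂ) = fun w => c * w := rfl
  rw [h, wd_cmul differentiable_fun_id, wd_id]; funext z; simp

theorem wdb_hmul : wdb (HMul.hMul c) = fun _ => 0 := by
  have h : (HMul.hMul c : ℂ → ℂ) = fun w => c * w := rfl
  rw [h, wdb_cmul differentiable_fun_id, wdb_id]; funext z; simp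

theorem wd_conj : wd (fun w => conj w) = fun _ => 0 := by
  funext z; unfold wd; rw [pdx_conj, pdy_conj]
  rw [div_eq_iff (two_ne_zero)]; ring_nf; rw [Complex.I_sq]; ring

theorem wdb_conj : wdb (fun w => conj w) = fun _ => 1 := by
  funext z; unfold wdb; rw [pdx_conj, pdy_conj]
  rw [div_eq_iff (two_ne_zero)]; ring_nf; rw [Complex.I_sq]; ring

theorem pd_comm (hf : ContDiff ℝ (⊤ : ℕ∞) f) : pdx (pdy f) z = pdy (pdx f) z := by
  have hd : Differentiable ℝ f := hf.differentiable (by simp)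
  have hd2 : Differentiable ℝ (fderiv ℝ f) :=
    (hf.fderiv_right (m := (⊤:ℕ∞)) (by exact_mod_cast le_refl _)).differentiable
      (by simp)
  have h1 : pdx (pdy f) z = fderiv ℝ (fderiv ℝ f) z 1 I := by
    unfold pdx pdy
    rw [fderiv_clm_apply (hd2 z) (differentiableAt_const _)]
    simp
  have h2 : pdy (pdx f) z = fderiv ℝ (fderiv ℝ f) z I 1 := by
    unfold pdx pdy
    rw [fderiv_clm_apply (hd2 z) (differentiableAt_const _)]
    simp
  rw [h1, h2]
  exact second_derivative_symmetric (fun y => (hd y).hasFDerivAt) ((hd2 z).hasFDerivAt) 1 I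

theorem wd_comm (hf : ContDiff ℝ (⊤ : ℕ∞) f) : wd (wdb f) = wdb (wd f) := by
  funext z
  have hx : Differentiable ℝ (pdx f) :=
    (contDiff_pdx hf).differentiable (by simp)
  have hy : Differentiable ℝ (pdy f) :=
    (contDiff_pdy hf).differentiable (by simp)
  have e1 : wdb f = fun w => (1/2 : ℂ) * pdx f w + (I/2) * pdy f w := by
    funext w; unfold wdb; ring
  have e2 : wd f = fun w => (1/2 : ℂ) * pdx f w + (-I/2) * pdy f w := by
    funext w; unfold wd; ring
  have c1 : pdx (wdb f) z = (1/2 : ℂ) * pdx (pdx f) z + (I/2) * pdx (pdy f) z := by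
    rw [e1, pdx_add ((hx.const_mul _) z) ((hy.const_mul _) z), pdx_cmul (hx z),
      pdx_cmul (hy z)]
  have c2 : pdy (wdb f) z = (1/2 : ℂ) * pdy (pdx f) z + (I/2) * pdy (pdy f) z := by
    rw [e1, pdy_add ((hx.const_mul _) z) ((hy.const_mul _) z), pdy_cmul (hx z),
      pdy_cmul (hy z)]
  have c3 : pdx (wd f) z = (1/2 : ℂ) * pdx (pdx f) z + (-I/2) * pdx (pdy f) z := by
    rw [e2, pdx_add ((hx.const_mul _) z) ((hy.const_mul _) z), pdx_cmul (hx z),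
      pdx_cmul (hy z)]
  have c4 : pdy (wd f) z = (1/2 : ℂ) * pdy (pdx f) z + (-I/2) * pdy (pdy f) z := by
    rw [e2, pdy_add ((hx.const_mul _) z) ((hy.const_mul _) z), pdy_cmul (hx z),
      pdy_cmul (hy z)]
  show (pdx (wdb f) z - I * pdy (wdb f) z) / 2 = (pdx (wd f) z + I * pdy (wd f) z) / 2
  rw [c1, c2, c3, c4, pd_comm hf]
  ring

end helpers

/-- Lowering operator D_N ψ = (1+|z|²)∂̄ψ + Nzψ. -/
def DN (N : ℝ) (ψ : ℂ → ℂ) (z : ℂ) : ℂ :=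
  (1 + z * conj z) * wdb ψ z + (N : ℂ) * z * ψ z

/-- Raising operator D_N* ψ = -(1+|z|²)∂ψ + (N+1)z̄ψ. -/
def DNs (N : ℝ) (ψ : ℂ → ℂ) (z : ℂ) : ℂ :=
  -(1 + z * conj z) * wd ψ z + ((N : ℂ) + 1) * conj z * ψ z

/-- Dirac monopole operator
L_N ψ = -(1+|z|²)²∂∂̄ψ - Nz(1+|z|²)∂ψ + Nz̄(1+|z|²)∂̄ψ + N²(1+|z|²)ψ. -/
def LN (N : ℝ) (ψ : ℂ → ℂ) (z : ℂ) : ℂ :=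
  -(1 + z * conj z)^2 * wd (wdb ψ) z
    - (N : ℂ) * z * (1 + z * conj z) * wd ψ z
    + (N : ℂ) * conj z * (1 + z * conj z) * wdb ψ z
    + (N : ℂ)^2 * (1 + z * conj z) * ψ z

set_option maxHeartbeats 3000000 in
/-- the intertwining relations L_{N+1}D_N = D_N L_N and
L_N D_N* = D_N* L_{N+1}. -/
theorem monopole_intertwining (N : ℝ) (ψ : ℂ → ℂ) (hψ : ContDiff ℝ (⊤ : ℕ∞) ψ) :
    ∀ z : ℂ,
      LN (N + 1) (fun w => DN N ψ w) z = DN N (fun w => LN N ψ w) z ∧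
      LN N (fun w => DNs N ψ w) z = DNs N (fun w => LN (N + 1) ψ w) z := by
  intro z
  have hP : ContDiff ℝ (⊤ : ℕ∞) (wd ψ) := contDiff_wd hψ
  have hQ : ContDiff ℝ (⊤ : ℕ∞) (wdb ψ) := contDiff_wdb hψ
  have hPP : ContDiff ℝ (⊤ : ℕ∞) (wd (wd ψ)) := contDiff_wd hP
  have hQP : ContDiff ℝ (⊤ : ℕ∞) (wdb (wd ψ)) := contDiff_wdb hP
  have hPQ : ContDiff ℝ (⊤ : ℕ∞) (wd (wdb ψ)) := contDiff_wd hQ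
  have hQQ : ContDiff ℝ (⊤ : ℕ∞) (wdb (wdb ψ)) := contDiff_wdb hQ
  have d0 : Differentiable ℝ ψ := hψ.differentiable (by simp)
  have dP : Differentiable ℝ (wd ψ) := differentiable_wd hψ
  have dQ : Differentiable ℝ (wdb ψ) := differentiable_wdb hψ
  have dPP : Differentiable ℝ (wd (wd ψ)) := differentiable_wd hP
  have dQP : Differentiable ℝ (wdb (wd ψ)) := differentiable_wdb hP
  have dPQ : Differentiable ℝ (wd (wdb ψ)) := differentiable_wd hQ
  have dQQ : Differentiable ℝ (wdb (wdb ψ)) := differentiable_wdb hQ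
  constructor <;>
  · simp only [DN, DNs, LN, pow_two]
    simp (disch := first | assumption | fun_prop) only
      [wd_cmul, wdb_cmul, wd_add, wdb_add, wd_mul, wdb_mul, wd_sub, wdb_sub,
       wd_neg, wdb_neg, wd_const, wdb_const, wd_id, wdb_id, wd_conj, wdb_conj,
       wd_comm, wd_hmul, wdb_hmul]
    push_cast
    ring
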